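/- Let X₁,…,Xₙ be binary random variables and X₁*,…,Xₙ* mutually independent binary random variables such that for all i and all x₁,…,x_{i−1} ∈ {0,1}, P(Xᵢ = 1 | X₁=x₁,…,X_{i−1}=x_{i−1}) ≥ P(Xᵢ* = 1). Then for all k ≥ 0, P(∑ᵢ Xᵢ ≤ k) ≤ P(∑ᵢ Xᵢ* ≤ k). -/

import Mathlib

open MeasureTheory ProbabilityTheory Finset ENNReal

lemma stmt12_aux_alg {A B m p u v : ℝ≥0∞} (hm : m ≠ ∞) (hp : p ≤ 1) (hAB : A + B = m)
    (hpm : p * m ≤ B) (huv : u ≤ v) : A * v + B * u ≤ m * (p * u + (1 - p) * v) := by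
  have hpmfin : p * m ≠ ∞ := by
    refine ne_top_of_le_ne_top hm ?_
    calc p * m ≤ 1 * m := by gcongr
    _ = m := one_mul m
  set c := B - p * m with hc
  have hB : p * m + c = B := add_tsub_cancel_of_le hpm
  have hq : (1 - p) * m + p * m = m := by
    rw [← add_mul, tsub_add_cancel_of_le hp, one_mul]
  have hAc : A + c = (1 - p) * m := by
    have h1 : (A + c) + p * m = m := by
      rw [add_assoc, add_comm c, hB, hAB]
    exact WithTop.add_right_cancel hpmfin (h1.trans hq.symm)
  calc A * v + B * u = (p * m) * u + (c * u + A * v) := by rw [← hB]; ring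
    _ ≤ (p * m) * u + (c * v + A * v) := by gcongr
    _ = (p * m) * u + (A + c) * v := by ring
    _ = m * (p * u + (1 - p) * v) := by rw [hAc]; ring

open MeasureTheory ProbabilityTheory in
theorem stmt_12 {Ω : Type*} [MeasureSpace Ω] [IsProbabilityMeasure (ℙ : Measure Ω)]
    (n : ℕ) (X Xstar : Fin n → Ω → ℕ)
    (hXmeas : ∀ i, Measurable (X i)) (hXsmeas : ∀ i, Measurable (Xstar i))
    (hXbin : ∀ i ω, X i ω = 0 ∨ X i ω = 1)
    (hXsbin : ∀ i ω, Xstar i ω = 0 ∨ Xstar i ω = 1)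
    (hind : iIndepFun Xstar ℙ)
    (hdom : ∀ i : Fin n, ∀ x : Fin n → ℕ, (∀ j, x j = 0 ∨ x j = 1) →
      ℙ {ω | Xstar i ω = 1} * ℙ {ω | ∀ j, j < i → X j ω = x j} ≤
        ℙ ({ω | X i ω = 1} ∩ {ω | ∀ j, j < i → X j ω = x j})) :
    ∀ k : ℕ, ℙ {ω | ∑ i, X i ω ≤ k} ≤ ℙ {ω | ∑ i, Xstar i ω ≤ k} := by
  intro k
  classical
  set T : ℕ → Ω → ℕ :=
    fun i ω => ∑ j ∈ Finset.univ.filter (fun j : Fin n => (j : ℕ) < i), X j ω with hT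
  set tl : ℕ → Ω → ℕ :=
    fun i ω => ∑ j ∈ Finset.univ.filter (fun j : Fin n => i ≤ (j : ℕ)), Xstar j ω with htl
  set g : ℕ → ℕ → ℝ≥0∞ := fun i s => ℙ {ω | tl i ω + s ≤ k} with hg
  set H : ℕ → ℝ≥0∞ :=
    fun i => ∑ s ∈ Finset.range (n + 1), ℙ {ω | T i ω = s} * g i s with hH
  have hTmeas : ∀ i, Measurable (T i) := fun i =>
    Finset.measurable_sum _ fun j _ => hXmeas j
  have htlmeas : ∀ i, Measurable (tl i) := fun i =>
    Finset.measurable_sum _ fun j _ => hXsmeas j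
  have mT : ∀ i s, MeasurableSet {ω | T i ω = s} := fun i s =>
    (hTmeas i) (MeasurableSet.of_discrete (s := {s}))
  have mXb : ∀ (I : Fin n) (b : ℕ), MeasurableSet {ω | X I ω = b} := fun I b =>
    (hXmeas I) (MeasurableSet.of_discrete (s := {b}))
  have mXsb : ∀ (I : Fin n) (b : ℕ), MeasurableSet {ω | Xstar I ω = b} := fun I b =>
    (hXsmeas I) (MeasurableSet.of_discrete (s := {b}))
  have mtl : ∀ i s, MeasurableSet {ω | tl i ω + s ≤ k} := fun i s =>
    (htlmeas i) (MeasurableSet.of_discrete (s := {t | t + s ≤ k}))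
  have hXle : ∀ (j : Fin n) ω, X j ω ≤ 1 := by
    intro j ω; rcases hXbin j ω with h | h <;> simp [h]
  have hsumX_le : ∀ ω, ∑ j, X j ω ≤ n := by
    intro ω
    calc ∑ j, X j ω ≤ ∑ _j : Fin n, 1 := Finset.sum_le_sum fun j _ => hXle j ω
      _ = n := by simp
  have hTle : ∀ i ω, T i ω ≤ ∑ j, X j ω := by
    intro i ω
    exact Finset.sum_le_sum_of_subset (Finset.filter_subset _ _)
  -- splitting lemmas
  have hTsplit : ∀ (i : ℕ) (hi : i < n) (ω : Ω), T (i + 1) ω = T i ω + X ⟨i, hi⟩ ω := by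
    intro i hi ω
    have hins : Finset.univ.filter (fun j : Fin n => (j : ℕ) < i + 1) =
        insert ⟨i, hi⟩ (Finset.univ.filter (fun j : Fin n => (j : ℕ) < i)) := by
      ext j
      simp only [Finset.mem_filter, Finset.mem_insert, Finset.mem_univ, true_and, Fin.ext_iff]
      omega
    simp only [hT]
    rw [hins, Finset.sum_insert (by simp)]
    ring
  have htlsplit : ∀ (i : ℕ) (hi : i < n) (ω : Ω), tl i ω = Xstar ⟨i, hi⟩ ω + tl (i + 1) ω := by
    intro i hi ω
    have hins : Finset.univ.filter (fun j : Fin n => i ≤ (j : ℕ)) =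
        insert ⟨i, hi⟩ (Finset.univ.filter (fun j : Fin n => i + 1 ≤ (j : ℕ))) := by
      ext j
      simp only [Finset.mem_filter, Finset.mem_insert, Finset.mem_univ, true_and, Fin.ext_iff]
      omega
    simp only [htl]
    rw [hins, Finset.sum_insert (by simp)]
  -- the main step
  have step : ∀ i, i < n → H (i + 1) ≤ H i := by
    intro i hi
    set I : Fin n := ⟨i, hi⟩ with hI
    set A : ℕ → ℝ≥0∞ := fun s => ℙ ({ω | X I ω = 0} ∩ {ω | T i ω = s}) with hA
    set B : ℕ → ℝ≥0∞ := fun s => ℙ ({ω | X I ω = 1} ∩ {ω | T i ω = s}) with hB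
    set p1 : ℝ≥0∞ := ℙ {ω | Xstar I ω = 1} with hp1
    -- decomposition of P(T i = s)
    have hABsum : ∀ s, ℙ {ω | T i ω = s} = A s + B s := by
      intro s
      have hU : {ω | T i ω = s} =
          ({ω | X I ω = 0} ∩ {ω | T i ω = s}) ∪ ({ω | X I ω = 1} ∩ {ω | T i ω = s}) := by
        ext ω
        simp only [Set.mem_union, Set.mem_inter_iff, Set.mem_setOf_eq]
        rcases hXbin I ω with h | h <;> simp [h]
      have hd : Disjoint ({ω | X I ω = 0} ∩ {ω | T i ω = s})
          ({ω | X I ω = 1} ∩ {ω | T i ω = s}) := by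
        rw [Set.disjoint_left]
        rintro ω ⟨h0, -⟩ ⟨h1, -⟩
        simp only [Set.mem_setOf_eq] at h0 h1
        omega
      rw [hU, measure_union hd ((mXb I 1).inter (mT i s))]
    -- probability of Xstar I = 0
    have hp0 : ℙ {ω | Xstar I ω = 0} = 1 - p1 := by
      have hU : {ω | Xstar I ω = 0} ∪ {ω | Xstar I ω = 1} = Set.univ := by
        ext ω
        simp only [Set.mem_union, Set.mem_setOf_eq, Set.mem_univ, iff_true]
        exact hXsbin I ω
      have hd : Disjoint {ω | Xstar I ω = 0} {ω | Xstar I ω = 1} := by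
        rw [Set.disjoint_left]
        intro ω h0 h1
        simp only [Set.mem_setOf_eq] at h0 h1
        omega
      have hsum : ℙ {ω | Xstar I ω = 0} + p1 = 1 := by
        rw [hp1, ← measure_union hd (mXsb I 1), hU, measure_univ]
      exact ENNReal.eq_sub_of_add_eq (measure_ne_top _ _) hsum
    -- independence of Xstar I and the tail
    have hmul : ∀ (b : ℕ) (sets : Set ℕ),
        ℙ ({ω | Xstar I ω = b} ∩ {ω | tl (i + 1) ω ∈ sets}) =
          ℙ {ω | Xstar I ω = b} * ℙ {ω | tl (i + 1) ω ∈ sets} := by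
      intro b sets
      set Ssucc := Finset.univ.filter (fun j : Fin n => i + 1 ≤ (j : ℕ)) with hSsucc
      have hIS : I ∉ Ssucc := by simp [hSsucc, hI]
      have hidf : IndepFun (∑ j ∈ Ssucc, Xstar j) (Xstar I) ℙ :=
        hind.indepFun_finsetSum_of_notMem hXsmeas hIS
      have key := hidf.measure_inter_preimage_eq_mul sets {b}
        MeasurableSet.of_discrete MeasurableSet.of_discrete
      have e1 : (∑ j ∈ Ssucc, Xstar j) ⁻¹' sets = {ω | tl (i + 1) ω ∈ sets} := by
        ext ω
        simp only [Set.mem_preimage, Finset.sum_apply, Set.mem_setOf_eq, htl, hSsucc]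
      have e2 : (Xstar I) ⁻¹' {b} = {ω | Xstar I ω = b} := rfl
      rw [e1, e2] at key
      rw [Set.inter_comm, key, mul_comm]
    -- recursion for g
    have grec : ∀ s, g i s = p1 * g (i + 1) (s + 1) + (1 - p1) * g (i + 1) s := by
      intro s
      have hsplit : {ω | tl i ω + s ≤ k} =
          ({ω | Xstar I ω = 1} ∩ {ω | tl (i + 1) ω + (s + 1) ≤ k}) ∪
          ({ω | Xstar I ω = 0} ∩ {ω | tl (i + 1) ω + s ≤ k}) := by
        ext ω
        simp only [Set.mem_setOf_eq, Set.mem_union, Set.mem_inter_iff]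
        rw [htlsplit i hi ω]
        rcases hXsbin I ω with h | h <;> rw [h] <;> constructor <;> intro h' <;> omega
      have hd : Disjoint ({ω | Xstar I ω = 1} ∩ {ω | tl (i + 1) ω + (s + 1) ≤ k})
          ({ω | Xstar I ω = 0} ∩ {ω | tl (i + 1) ω + s ≤ k}) := by
        rw [Set.disjoint_left]
        rintro ω ⟨h1, -⟩ ⟨h0, -⟩
        simp only [Set.mem_setOf_eq] at h0 h1
        omega
      have e1 : ℙ ({ω | Xstar I ω = 1} ∩ {ω | tl (i + 1) ω + (s + 1) ≤ k}) =
          ℙ {ω | Xstar I ω = 1} * ℙ {ω | tl (i + 1) ω + (s + 1) ≤ k} :=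
        hmul 1 {t | t + (s + 1) ≤ k}
      have e0 : ℙ ({ω | Xstar I ω = 0} ∩ {ω | tl (i + 1) ω + s ≤ k}) =
          ℙ {ω | Xstar I ω = 0} * ℙ {ω | tl (i + 1) ω + s ≤ k} :=
        hmul 0 {t | t + s ≤ k}
      simp only [hg]
      rw [hsplit, measure_union hd ((mXsb I 0).inter (mtl (i + 1) s)), e1, e0, hp0, hp1]
    -- rewriting of H (i+1)
    have hBn : B n = 0 := by
      have : ({ω | X I ω = 1} ∩ {ω | T i ω = n}) = ∅ := by
        ext ω
        simp only [Set.mem_inter_iff, Set.mem_setOf_eq, Set.mem_empty_iff_false, iff_false,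
          not_and]
        intro h1 h2
        have h3 : T (i + 1) ω = n + 1 := by rw [hTsplit i hi ω, h1, h2]
        have h4 : T (i + 1) ω ≤ n := le_trans (hTle _ _) (hsumX_le ω)
        omega
      rw [hB]; simp only [this, measure_empty]
    have hH1 : H (i + 1) = ∑ s ∈ Finset.range (n + 1),
        (A s * g (i + 1) s + B s * g (i + 1) (s + 1)) := by
      have hPsucc : ∀ s, ℙ {ω | T (i + 1) ω = s} =
          A s + ℙ ({ω | X I ω = 1} ∩ {ω | T i ω + 1 = s}) := by
        intro s
        have hU : {ω | T (i + 1) ω = s} =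
            ({ω | X I ω = 0} ∩ {ω | T i ω = s}) ∪
            ({ω | X I ω = 1} ∩ {ω | T i ω + 1 = s}) := by
          ext ω
          simp only [Set.mem_setOf_eq, Set.mem_union, Set.mem_inter_iff]
          rw [hTsplit i hi ω]
          rcases hXbin I ω with h | h <;> rw [h] <;> constructor <;> intro h' <;> omega
        have hd : Disjoint ({ω | X I ω = 0} ∩ {ω | T i ω = s})
            ({ω | X I ω = 1} ∩ {ω | T i ω + 1 = s}) := by
          rw [Set.disjoint_left]
          rintro ω ⟨h0, -⟩ ⟨h1, -⟩
          simp only [Set.mem_setOf_eq] at h0 h1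
          omega
        have hmeas2 : MeasurableSet ({ω | X I ω = 1} ∩ {ω | T i ω + 1 = s}) :=
          (mXb I 1).inter ((hTmeas i) (MeasurableSet.of_discrete (s := {t | t + 1 = s})))
        rw [hU, measure_union hd hmeas2]
      have hshift : ∑ s ∈ Finset.range (n + 1),
          ℙ ({ω | X I ω = 1} ∩ {ω | T i ω + 1 = s}) * g (i + 1) s =
          ∑ s ∈ Finset.range (n + 1), B s * g (i + 1) (s + 1) := by
        rw [Finset.sum_range_succ' (fun s => ℙ ({ω | X I ω = 1} ∩ {ω | T i ω + 1 = s}) *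
          g (i + 1) s) n]
        have hz : ℙ ({ω | X I ω = 1} ∩ {ω | T i ω + 1 = 0}) = 0 := by
          have : ({ω | X I ω = 1} ∩ {ω | T i ω + 1 = 0}) = ∅ := by
            ext ω; simp
          simp only [this, measure_empty]
        rw [hz, zero_mul, add_zero]
        rw [Finset.sum_range_succ (fun s => B s * g (i + 1) (s + 1)) n, hBn, zero_mul, add_zero]
        apply Finset.sum_congr rfl
        intro t _
        have hset : {ω | T i ω + 1 = t + 1} = {ω | T i ω = t} := by
          ext ω
          show T i ω + 1 = t + 1 ↔ T i ω = t
          omega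
        rw [hset, hB]
      simp only [hH]
      calc ∑ s ∈ Finset.range (n + 1), ℙ {ω | T (i + 1) ω = s} * g (i + 1) s
          = ∑ s ∈ Finset.range (n + 1), (A s * g (i + 1) s +
              ℙ ({ω | X I ω = 1} ∩ {ω | T i ω + 1 = s}) * g (i + 1) s) := by
            apply Finset.sum_congr rfl
            intro s _
            rw [hPsucc s, add_mul]
        _ = ∑ s ∈ Finset.range (n + 1), A s * g (i + 1) s +
            ∑ s ∈ Finset.range (n + 1),
              ℙ ({ω | X I ω = 1} ∩ {ω | T i ω + 1 = s}) * g (i + 1) s := by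
            rw [Finset.sum_add_distrib]
        _ = ∑ s ∈ Finset.range (n + 1), A s * g (i + 1) s +
            ∑ s ∈ Finset.range (n + 1), B s * g (i + 1) (s + 1) := by rw [hshift]
        _ = ∑ s ∈ Finset.range (n + 1), (A s * g (i + 1) s + B s * g (i + 1) (s + 1)) := by
            rw [Finset.sum_add_distrib]
    -- domination: p1 * P(T i = s) ≤ B s
    have hpm : ∀ s, p1 * ℙ {ω | T i ω = s} ≤ B s := by
      intro s
      set E : (Fin n → ℕ) → Set Ω := fun x => {ω | ∀ j, j < I → X j ω = x j} with hE
      set Pats : Finset (Fin n → ℕ) :=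
        (Fintype.piFinset fun _ : Fin n => ({0, 1} : Finset ℕ)).filter
          (fun x => (∀ j : Fin n, ¬ (j : ℕ) < i → x j = 0) ∧
            (∑ j ∈ Finset.univ.filter (fun j : Fin n => (j : ℕ) < i), x j) = s) with hPats
      have hlt : ∀ j : Fin n, j < I ↔ (j : ℕ) < i := by
        intro j; rw [Fin.lt_def]
      have hEmeas : ∀ x, MeasurableSet (E x) := by
        intro x
        have hEeq : E x = ⋂ j : Fin n, {ω | j < I → X j ω = x j} := by
          ext ω; simp [hE]
        rw [hEeq]
        refine MeasurableSet.iInter fun j => ?_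
        by_cases h : j < I
        · have : {ω | j < I → X j ω = x j} = {ω | X j ω = x j} := by
            ext ω; simp [h]
          rw [this]; exact mXb j (x j)
        · have : {ω | j < I → X j ω = x j} = Set.univ := by
            ext ω; simp [h]
          rw [this]; exact MeasurableSet.univ
      have hcover : {ω | T i ω = s} = ⋃ x ∈ Pats, E x := by
        ext ω
        simp only [Set.mem_setOf_eq, Set.mem_iUnion, hE, hPats, Finset.mem_filter,
          Fintype.mem_piFinset, Finset.mem_insert, Finset.mem_singleton]
        constructor
        · intro hTs
          refine ⟨fun j => if (j : ℕ) < i then X j ω else 0, ⟨?_, ?_, ?_⟩, ?_⟩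
          · intro j
            by_cases h : (j : ℕ) < i
            · simp only [if_pos h]; rcases hXbin j ω with h' | h' <;> simp [h']
            · simp [if_neg h]
          · intro j h; simp [if_neg h]
          · rw [← hTs, hT]
            apply Finset.sum_congr rfl
            intro j hj
            simp only [Finset.mem_filter] at hj
            simp [hj.2]
          · intro j hj
            simp [(hlt j).mp hj]
        · rintro ⟨x, ⟨-, -, hsx⟩, hx⟩
          rw [← hsx, hT]
          apply Finset.sum_congr rfl
          intro j hj
          simp only [Finset.mem_filter] at hj
          exact hx j ((hlt j).mpr hj.2)
      have hdisj : (↑Pats : Set (Fin n → ℕ)).PairwiseDisjoint E := by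
        intro x hx y hy hxy
        simp only [Finset.coe_filter, Set.mem_setOf_eq, hPats, Finset.mem_coe,
          Finset.mem_filter, Fintype.mem_piFinset] at hx hy
        rw [Function.onFun, Set.disjoint_left]
        intro ω hωx hωy
        apply hxy
        funext j
        by_cases h : (j : ℕ) < i
        · rw [← hωx j ((hlt j).mpr h), ← hωy j ((hlt j).mpr h)]
        · rw [hx.2.1 j h, hy.2.1 j h]
      have hsum1 : ℙ {ω | T i ω = s} = ∑ x ∈ Pats, ℙ (E x) := by
        rw [hcover, measure_biUnion_finset hdisj fun x _ => hEmeas x]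
      have hsum2 : B s = ∑ x ∈ Pats, ℙ ({ω | X I ω = 1} ∩ E x) := by
        have hU2 : {ω | X I ω = 1} ∩ {ω | T i ω = s} =
            ⋃ x ∈ Pats, ({ω | X I ω = 1} ∩ E x) := by
          rw [hcover, Set.inter_iUnion₂]
        simp only [hB]
        rw [hU2, measure_biUnion_finset
          (fun x hx y hy hxy => ((hdisj hx hy hxy).mono Set.inter_subset_right
            Set.inter_subset_right))
          fun x _ => (mXb I 1).inter (hEmeas x)]
      have hxbin : ∀ x ∈ Pats, ∀ j, x j = 0 ∨ x j = 1 := by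
        intro x hx j
        simp only [hPats, Finset.mem_filter, Fintype.mem_piFinset, Finset.mem_insert,
          Finset.mem_singleton] at hx
        exact hx.1 j
      calc p1 * ℙ {ω | T i ω = s} = ∑ x ∈ Pats, p1 * ℙ (E x) := by
            rw [hsum1, Finset.mul_sum]
        _ ≤ ∑ x ∈ Pats, ℙ ({ω | X I ω = 1} ∩ E x) :=
            Finset.sum_le_sum fun x hx => hdom I x (hxbin x hx)
        _ = B s := hsum2.symm
    -- termwise bound and conclusion of the step
    have hterm : ∀ s, A s * g (i + 1) s + B s * g (i + 1) (s + 1) ≤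
        ℙ {ω | T i ω = s} * g i s := by
      intro s
      rw [grec s]
      refine stmt12_aux_alg (measure_ne_top _ _) prob_le_one (hABsum s).symm (hpm s) ?_
      simp only [hg]
      apply measure_mono
      intro ω hω
      simp only [Set.mem_setOf_eq] at hω ⊢
      omega
    rw [hH1]
    exact Finset.sum_le_sum fun s _ => hterm s
  -- endpoint at 0
  have hH0 : H 0 = ℙ {ω | ∑ j, Xstar j ω ≤ k} := by
    have hT0 : ∀ ω, T 0 ω = 0 := by
      intro ω; simp [hT]
    have htl0 : ∀ ω, tl 0 ω = ∑ j, Xstar j ω := by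
      intro ω; simp [htl]
    simp only [hH]
    rw [Finset.sum_eq_single 0]
    · have h1 : {ω | T 0 ω = 0} = Set.univ := by
        ext ω; simp [hT0 ω]
      have h2 : g 0 0 = ℙ {ω | ∑ j, Xstar j ω ≤ k} := by
        simp only [hg]
        congr 1
        ext ω
        simp [htl0 ω]
      rw [h1, measure_univ, h2, one_mul]
    · intro s _ hs
      have : {ω | T 0 ω = s} = ∅ := by
        ext ω; simp [hT0 ω]; omega
      rw [this, measure_empty, zero_mul]
    · intro h
      exact absurd (Finset.mem_range.mpr (Nat.succ_pos n)) h
  -- endpoint at n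
  have hHn : ℙ {ω | ∑ j, X j ω ≤ k} ≤ H n := by
    have hTn : ∀ ω, T n ω = ∑ j, X j ω := by
      intro ω
      simp only [hT]
      apply Finset.sum_congr _ fun j _ => rfl
      apply Finset.filter_true_of_mem
      intro j _
      exact j.isLt
    have htln : ∀ ω, tl n ω = 0 := by
      intro ω
      simp only [htl]
      apply Finset.sum_eq_zero
      intro j hj
      simp only [Finset.mem_filter, Finset.mem_univ, true_and] at hj
      exact absurd hj (Nat.not_le.mpr j.isLt)
    have hones : ∀ s, s ≤ k → g n s = 1 := by
      intro s hs
      simp only [hg]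
      have huniv : {ω | tl n ω + s ≤ k} = Set.univ := by
        ext ω
        simp only [Set.mem_setOf_eq, Set.mem_univ, iff_true, htln ω]
        omega
      rw [huniv, measure_univ]
    have hd : (↑((Finset.range (n + 1)).filter (· ≤ k)) : Set ℕ).PairwiseDisjoint
        (fun s => {ω | T n ω = s}) := by
      intro s _ t _ hst
      rw [Function.onFun, Set.disjoint_left]
      intro ω hωs hωt
      simp only [Set.mem_setOf_eq] at hωs hωt
      exact hst (hωs.symm.trans hωt)
    have hcover : {ω | ∑ j, X j ω ≤ k} =
        ⋃ s ∈ (Finset.range (n + 1)).filter (· ≤ k), {ω | T n ω = s} := by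
      ext ω
      simp only [Set.mem_setOf_eq, Set.mem_iUnion, Finset.mem_filter, Finset.mem_range,
        exists_prop]
      constructor
      · intro h
        exact ⟨∑ j, X j ω, ⟨Nat.lt_succ_of_le (hsumX_le ω), h⟩, hTn ω⟩
      · rintro ⟨s, ⟨-, hsk⟩, hTs⟩
        rw [hTn ω] at hTs
        omega
    calc ℙ {ω | ∑ j, X j ω ≤ k}
        = ∑ s ∈ (Finset.range (n + 1)).filter (· ≤ k), ℙ {ω | T n ω = s} := by
          rw [hcover, measure_biUnion_finset hd fun s _ => mT n s]
      _ = ∑ s ∈ (Finset.range (n + 1)).filter (· ≤ k), ℙ {ω | T n ω = s} * g n s := by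
          apply Finset.sum_congr rfl
          intro s hs
          rw [hones s (Finset.mem_filter.mp hs).2, mul_one]
      _ ≤ ∑ s ∈ Finset.range (n + 1), ℙ {ω | T n ω = s} * g n s :=
          Finset.sum_le_sum_of_subset (Finset.filter_subset _ _)
      _ = H n := by simp only [hH]
  have chain : ∀ i, i ≤ n → H i ≤ H 0 := by
    intro i
    induction i with
    | zero => intro _; exact le_rfl
    | succ i ih =>
      intro h
      exact (step i (Nat.lt_of_succ_le h)).trans (ih (Nat.le_of_succ_le h))
  calc ℙ {ω | ∑ i, X i ω ≤ k} ≤ H n := hHn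
    _ ≤ H 0 := chain n le_rfl
    _ = ℙ {ω | ∑ i, Xstar i ω ≤ k} := hH0
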